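/- For every positive integer n, (1+q)^2 times the sum over k from 1 to n of q^{k-1}·([k]_q)^2·([k-1]_q + [k+1]_q) equals (1+q)^2 · ([n+1]_q [n]_q / (1+q))^2, equivalently sum_{k=1}^n q^{k-1} ([k]_q)^2 ([k-1]_q + [k+1]_q)/(1+q) = (q-binomial(n+1,2))^2. -/

import Mathlib

open Finset

/-- The field of rational functions in q over ℚ. -/
noncomputable def q : RatFunc ℚ := RatFunc.X

/-- The q-analogue [m]_q = 1 + q + ... + q^{m-1}. -/
noncomputable def qa (m : ℕ) : RatFunc ℚ := ∑ j ∈ Finset.range m, q ^ j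

lemma one_add_q_ne_zero : (1 + q : RatFunc ℚ) ≠ 0 := by
  intro h
  have h2 : (algebraMap (Polynomial ℚ) (RatFunc ℚ)) (1 + Polynomial.X) = 0 := by
    rw [map_add, map_one, RatFunc.algebraMap_X]
    exact h
  rw [FaithfulSMul.algebraMap_eq_zero_iff] at h2
  have h3 := congrArg (Polynomial.eval 0) h2
  simp at h3

lemma qa_succ (m : ℕ) : qa (m + 1) = qa m + q ^ m := by
  simp [qa, Finset.sum_range_succ]

theorem garrett_hummel_q_analogue (n : ℕ) (hn : 0 < n) :
    (∑ k ∈ Finset.Icc 1 n,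
        q ^ (k - 1) * (qa k) ^ 2 * ((qa (k - 1) + qa (k + 1)) / (1 + q)))
      = (qa (n + 1) * qa n / (1 + q)) ^ 2 := by
  have h0 := one_add_q_ne_zero
  induction n with
  | zero => exact absurd hn (lt_irrefl 0)
  | succ m ih =>
    rcases Nat.eq_zero_or_pos m with hm | hm
    · subst hm
      simp [qa, Finset.sum_range_succ]
      field_simp
    · rw [Finset.sum_Icc_succ_top (Nat.le_add_left 1 m), ih hm]
      have h1 : m + 1 - 1 = m := rfl
      rw [h1, qa_succ (m+1), qa_succ m]
      field_simp
      ring
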